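/- Define g(τ) near τ = 1 implicitly by w²/2 = τ - log τ - 1 (with w ~ τ - 1 as τ → 1), and consider F(w) = μ τ^{δ-1}/(1 - τ^μ) · dτ/dw. Then F(w) + 1/w is analytic at w = 0 and its value at w = 0 (the coefficient g_0(μ;δ)) equals 1/6 - δ + μ/2. -/

import Mathlib

open Real Filter Topology


private lemma analyticAt_deriv' {f : ℝ → ℝ} {x : ℝ} (hf : AnalyticAt ℝ f x) :
    AnalyticAt ℝ (deriv f) x := by
  obtain ⟨s, hs, h⟩ := hf.eventually_analyticAt.exists_mem
  exact AnalyticOnNhd.deriv (fun y hy => h y hy) x (mem_of_mem_nhds hs)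

private lemma slope_limit' {f : ℝ → ℝ} {a : ℝ} (hf : HasDerivAt f a 0) (h0 : f 0 = 0) :
    Tendsto (fun w => f w / w) (𝓝[≠] (0:ℝ)) (𝓝 a) := by
  have h := hasDerivAt_iff_tendsto_slope.mp hf
  refine h.congr fun w => ?_
  simp [slope_def_field, h0]

private lemma peano2 {f : ℝ → ℝ} {c : ℝ}
    (hdf : ∀ᶠ w in 𝓝 (0:ℝ), DifferentiableAt ℝ f w)
    (hf2 : HasDerivAt (deriv f) (2*c) 0) :
    Tendsto (fun w => (f w - f 0 - deriv f 0 * w - c * w^2) / w^2) (𝓝[≠] (0:ℝ)) (𝓝 0) := by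
  have hFd : ∀ᶠ w in 𝓝[≠] (0:ℝ),
      HasDerivAt (fun w => f w - f 0 - deriv f 0 * w - c * w^2)
        (deriv f w - deriv f 0 - 2*c*w) w := by
    filter_upwards [eventually_nhdsWithin_of_eventually_nhds hdf] with w hw
    have h1 := ((hw.hasDerivAt.sub_const (f 0)).sub
        ((hasDerivAt_id w).const_mul (deriv f 0))).sub ((hasDerivAt_pow 2 w).const_mul c)
    refine h1.congr_deriv ?_
    push_cast; ring
  have hGd : ∀ᶠ w in 𝓝[≠] (0:ℝ), HasDerivAt (fun w : ℝ => w^2) (2*w) w := by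
    filter_upwards with w
    simpa using hasDerivAt_pow 2 w
  have hg' : ∀ᶠ w in 𝓝[≠] (0:ℝ), (2:ℝ)*w ≠ 0 := by
    filter_upwards [self_mem_nhdsWithin] with w hw
    simpa using hw
  have hfa : Tendsto (fun w => f w - f 0 - deriv f 0 * w - c * w^2) (𝓝[≠] (0:ℝ)) (𝓝 0) := by
    have hc : ContinuousAt (fun w => f w - f 0 - deriv f 0 * w - c * w^2) 0 := by
      have := hdf.self_of_nhds.continuousAt
      fun_prop
    have h2 := hc.tendsto.mono_left (nhdsWithin_le_nhds (s := {(0:ℝ)}ᶜ))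
    simpa using h2
  have hga : Tendsto (fun w : ℝ => w^2) (𝓝[≠] (0:ℝ)) (𝓝 0) := by
    have := ((continuous_pow 2).tendsto (0:ℝ)).mono_left (nhdsWithin_le_nhds (s := {(0:ℝ)}ᶜ))
    simpa using this
  have hslope : Tendsto (fun w => (deriv f w - deriv f 0)/w) (𝓝[≠] (0:ℝ)) (𝓝 (2*c)) := by
    have h := hasDerivAt_iff_tendsto_slope.mp hf2
    refine h.congr fun w => ?_
    simp [slope_def_field]
  have hdiv : Tendsto (fun w => (deriv f w - deriv f 0 - 2*c*w)/(2*w)) (𝓝[≠] (0:ℝ)) (𝓝 0) := by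
    have h2 : Tendsto (fun w => ((deriv f w - deriv f 0)/w - 2*c)/2) (𝓝[≠] (0:ℝ))
        (𝓝 ((2*c - 2*c)/2)) := (hslope.sub_const (2*c)).div_const 2
    have h3 : Tendsto (fun w => ((deriv f w - deriv f 0)/w - 2*c)/2) (𝓝[≠] (0:ℝ)) (𝓝 0) := by
      simpa using h2
    refine h3.congr' ?_
    filter_upwards [self_mem_nhdsWithin] with w hw
    have hw0 : w ≠ 0 := hw
    field_simp
  exact HasDerivAt.lhopital_zero_nhdsNE hFd hGd hg' hfa hga hdiv

private lemma factor' {f : ℝ → ℝ} {n : ℕ} {L : ℝ} (hf : AnalyticAt ℝ f 0)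
    (hlim : Tendsto (fun w => f w / w ^ n) (𝓝[≠] (0:ℝ)) (𝓝 L)) :
    ∃ h : ℝ → ℝ, AnalyticAt ℝ h 0 ∧ h 0 = L ∧ ∀ᶠ w in 𝓝 (0:ℝ), f w = w ^ n * h w := by
  rcases eq_or_ne (analyticOrderAt f 0) ⊤ with htop | hfin
  · have hev : ∀ᶠ w in 𝓝 (0:ℝ), f w = 0 := analyticOrderAt_eq_top.mp htop
    have h0 : Tendsto (fun w => f w / w ^ n) (𝓝[≠] (0:ℝ)) (𝓝 0) := by
      refine Tendsto.congr' ?_ tendsto_const_nhds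
      filter_upwards [eventually_nhdsWithin_of_eventually_nhds hev] with w hw
      simp [hw]
    have hL : L = 0 := tendsto_nhds_unique hlim h0
    exact ⟨fun _ => 0, analyticAt_const, by simp [hL], hev.mono fun w hw => by simp [hw]⟩
  · obtain ⟨m, hm⟩ := WithTop.ne_top_iff_exists.mp hfin
    obtain ⟨φ, hφa, hφ0, hφev⟩ := (hf.analyticOrderAt_eq_natCast (n := m)).mp hm.symm
    have hfev : ∀ᶠ w in 𝓝 (0:ℝ), f w = w ^ m * φ w := by
      filter_upwards [hφev] with w hw; simpa using hw
    have hφt : Tendsto φ (𝓝[≠] (0:ℝ)) (𝓝 (φ 0)) :=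
      hφa.continuousAt.tendsto.mono_left nhdsWithin_le_nhds
    have hmn : n ≤ m := by
      by_contra hlt
      push_neg at hlt
      have hz : Tendsto (fun w : ℝ => w^(n-m)) (𝓝[≠] (0:ℝ)) (𝓝 0) := by
        have := ((continuous_pow (n-m)).tendsto (0:ℝ)).mono_left
          (nhdsWithin_le_nhds (s := {(0:ℝ)}ᶜ))
        simpa [zero_pow (by omega : n - m ≠ 0)] using this
      have h3 : Tendsto (fun w => (f w / w^n) * w^(n-m)) (𝓝[≠] (0:ℝ)) (𝓝 (L * 0)) :=
        hlim.mul hz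
      have h4 : Tendsto φ (𝓝[≠] (0:ℝ)) (𝓝 (L * 0)) := by
        refine h3.congr' ?_
        filter_upwards [eventually_nhdsWithin_of_eventually_nhds hfev,
          self_mem_nhdsWithin] with w hw hw0
        have hw0' : (w:ℝ) ≠ 0 := hw0
        have hpow : (w:ℝ)^n = w^m * w^(n-m) := by
          rw [← pow_add]; congr 1; omega
        rw [hw, hpow]
        field_simp
      have : φ 0 = 0 := by simpa using (tendsto_nhds_unique h4 hφt).symm
      exact hφ0 this
    refine ⟨fun w => w^(m-n) * φ w, ((analyticAt_id).pow _).mul hφa, ?_, ?_⟩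
    · have hcont : Tendsto (fun w : ℝ => w^(m-n) * φ w) (𝓝[≠] (0:ℝ))
          (𝓝 ((0:ℝ)^(m-n) * φ 0)) :=
        (((continuous_pow (m-n)).continuousAt.mul hφa.continuousAt).tendsto).mono_left
          nhdsWithin_le_nhds
      have heq : Tendsto (fun w : ℝ => w^(m-n) * φ w) (𝓝[≠] (0:ℝ)) (𝓝 L) := by
        refine hlim.congr' ?_
        filter_upwards [eventually_nhdsWithin_of_eventually_nhds hfev,
          self_mem_nhdsWithin] with w hw hw0
        have hw0' : (w:ℝ) ≠ 0 := hw0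
        have hpow : (w:ℝ)^m = w^n * w^(m-n) := by
          rw [← pow_add]; congr 1; omega
        rw [hw, hpow]
        field_simp
      exact tendsto_nhds_unique hcont heq
    · filter_upwards [hfev] with w hw
      rw [hw, ← mul_assoc, ← pow_add, Nat.add_sub_cancel' hmn]

private lemma final_alg {a e t w m : ℝ} (hw : w ≠ 0) (ht : t ≠ 0) (he : 1 - e ≠ 0)
    (ht1 : t - 1 ≠ 0) :
    (m * w^2 * a + (1-e)*(t-1)) / (w*((1-e)*(t-1))) = m * (a/t)/(1-e)*(w*t/(t-1)) + 1/w := by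
  field_simp

theorem terminant_coefficient_g0 (μ δ : ℝ) (hμ : 0 < μ) (τ : ℝ → ℝ)
    (hτa : AnalyticAt ℝ τ 0) (hτ0 : τ 0 = 1) (hτ'0 : deriv τ 0 = 1)
    (hτeq : ∀ᶠ w in 𝓝 (0 : ℝ), w ^ 2 / 2 = τ w - Real.log (τ w) - 1) :
    ∃ g : ℝ → ℝ, AnalyticAt ℝ g 0 ∧
      (∀ᶠ w in 𝓝[≠] (0 : ℝ),
        g w = μ * (τ w) ^ (δ - 1) / (1 - (τ w) ^ μ) * deriv τ w + 1 / w) ∧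
      g 0 = 1 / 6 - δ + μ / 2 := by
  have hμ0 : μ ≠ 0 := hμ.ne'
  have hτd : ∀ᶠ w in 𝓝 (0:ℝ), DifferentiableAt ℝ τ w :=
    hτa.eventually_analyticAt.mono fun w hw => hw.differentiableAt
  have hT1a : AnalyticAt ℝ (deriv τ) 0 := analyticAt_deriv' hτa
  have hT2a : AnalyticAt ℝ (deriv (deriv τ)) 0 := analyticAt_deriv' hT1a
  have hT1d : ∀ᶠ w in 𝓝 (0:ℝ), DifferentiableAt ℝ (deriv τ) w :=
    hT1a.eventually_analyticAt.mono fun w hw => hw.differentiableAt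
  have hτpos : ∀ᶠ w in 𝓝 (0:ℝ), 0 < τ w := by
    have h1 : ∀ᶠ y in 𝓝 (τ 0), 0 < y := by
      rw [hτ0]; exact eventually_gt_nhds one_pos
    exact hτa.continuousAt.tendsto.eventually h1
  -- Step 1 : the key differential identity  w τ = τ' (τ - 1)
  have hID : ∀ᶠ w in 𝓝 (0:ℝ), w * τ w = deriv τ w * (τ w - 1) := by
    have hder : deriv (fun w : ℝ => w^2/2) =ᶠ[𝓝 (0:ℝ)]
        deriv (fun w => τ w - Real.log (τ w) - 1) :=
      Filter.EventuallyEq.deriv hτeq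
    filter_upwards [hder, hτd, hτpos] with w hd hw hpos
    have h1 : deriv (fun w : ℝ => w^2/2) w = w := by
      have h := ((hasDerivAt_pow 2 w).div_const 2).deriv
      rw [h]; push_cast; ring
    have h2 : deriv (fun w => τ w - Real.log (τ w) - 1) w
        = deriv τ w - deriv τ w / τ w :=
      ((hw.hasDerivAt.sub (hw.hasDerivAt.log hpos.ne')).sub_const 1).deriv
    rw [h1, h2] at hd
    have hτne : τ w ≠ 0 := hpos.ne'
    have h3 : w * τ w = (deriv τ w - deriv τ w / τ w) * τ w := by rw [← hd]
    rw [h3]; field_simp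
  -- Step 2 : differentiate it once more
  have hID2 : ∀ᶠ w in 𝓝 (0:ℝ), 1 * τ w + w * deriv τ w
      = deriv (deriv τ) w * (τ w - 1) + deriv τ w * deriv τ w := by
    have hder : deriv (fun w => w * τ w) =ᶠ[𝓝 (0:ℝ)]
        deriv (fun w => deriv τ w * (τ w - 1)) := Filter.EventuallyEq.deriv hID
    filter_upwards [hder, hτd, hT1d] with w hd hw h1w
    have hL : deriv (fun w => w * τ w) w = 1 * τ w + w * deriv τ w :=
      ((hasDerivAt_id w).mul hw.hasDerivAt).deriv
    have hR : deriv (fun w => deriv τ w * (τ w - 1)) w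
        = deriv (deriv τ) w * (τ w - 1) + deriv τ w * deriv τ w :=
      (h1w.hasDerivAt.mul (hw.hasDerivAt.sub_const 1)).deriv
    rw [hL, hR] at hd
    exact hd
  -- Step 3 : second derivative of τ at 0
  have hT20 : deriv (deriv τ) 0 = 2/3 := by
    have hd := Filter.EventuallyEq.deriv_eq hID2
    have hL : HasDerivAt (fun w => 1 * τ w + w * deriv τ w)
        (1 * deriv τ 0 + (1 * deriv τ 0 + 0 * deriv (deriv τ) 0)) 0 :=
      (hτa.differentiableAt.hasDerivAt.const_mul 1).add
        ((hasDerivAt_id 0).mul hT1a.differentiableAt.hasDerivAt)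
    have hR : HasDerivAt (fun w => deriv (deriv τ) w * (τ w - 1) + deriv τ w * deriv τ w)
        (deriv (deriv (deriv τ)) 0 * (τ 0 - 1) + deriv (deriv τ) 0 * deriv τ 0
          + (deriv (deriv τ) 0 * deriv τ 0 + deriv τ 0 * deriv (deriv τ) 0)) 0 :=
      (hT2a.differentiableAt.hasDerivAt.mul (hτa.differentiableAt.hasDerivAt.sub_const 1)).add
        (hT1a.differentiableAt.hasDerivAt.mul hT1a.differentiableAt.hasDerivAt)
    rw [hL.deriv, hR.deriv, hτ0, hτ'0] at hd
    linarith
  -- analytic building blocks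
  set E : ℝ → ℝ := fun w => Real.exp (μ * (τ w - 1 - w^2/2)) with hEdef
  set Q : ℝ → ℝ := fun w => Real.exp (δ * (τ w - 1 - w^2/2)) with hQdef
  set k : ℝ → ℝ := fun w => 1 - E w with hkdef
  set u : ℝ → ℝ := fun w => τ w - 1 with hudef
  set N : ℝ → ℝ := fun w => μ * w^2 * Q w + k w * u w with hNdef
  set D : ℝ → ℝ := fun w => w * (k w * u w) with hDdef
  have hIa : AnalyticAt ℝ (fun w : ℝ => τ w - 1 - w^2/2) 0 :=
    (hτa.sub analyticAt_const).sub
      (((analyticAt_id).pow 2).div analyticAt_const (by norm_num))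
  have hEa : AnalyticAt ℝ E 0 := by
    rw [hEdef]; exact analyticAt_rexp.comp (analyticAt_const.mul hIa)
  have hQa : AnalyticAt ℝ Q 0 := by
    rw [hQdef]; exact analyticAt_rexp.comp (analyticAt_const.mul hIa)
  have hka : AnalyticAt ℝ k 0 := by rw [hkdef]; exact analyticAt_const.sub hEa
  have hua : AnalyticAt ℝ u 0 := by rw [hudef]; exact hτa.sub analyticAt_const
  have hNa : AnalyticAt ℝ N 0 := by
    rw [hNdef]
    exact ((analyticAt_const.mul ((analyticAt_id).pow 2)).mul hQa).add (hka.mul hua)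
  have hDa : AnalyticAt ℝ D 0 := by
    rw [hDdef]; exact (analyticAt_id).mul (hka.mul hua)
  have hE0 : E 0 = 1 := by simp [hEdef, hτ0]
  have hQ0 : Q 0 = 1 := by simp [hQdef, hτ0]
  have hk0 : k 0 = 0 := by simp [hkdef, hE0]
  have hu0 : u 0 = 0 := by simp [hudef, hτ0]
  -- derivatives at 0
  have hτ0' : HasDerivAt τ 1 0 := by
    have h := hτa.differentiableAt.hasDerivAt; rwa [hτ'0] at h
  have hI' : HasDerivAt (fun w : ℝ => τ w - 1 - w^2/2) 1 0 := by
    have h := (hτ0'.sub_const 1).sub ((hasDerivAt_pow 2 (0:ℝ)).div_const 2)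
    refine h.congr_deriv ?_; norm_num
  have hE' : HasDerivAt E μ 0 := by
    have h := (hI'.const_mul μ).exp
    rw [hEdef]
    convert h using 1
    rw [hτ0]; norm_num
  have hQ' : HasDerivAt Q δ 0 := by
    have h := (hI'.const_mul δ).exp
    rw [hQdef]
    convert h using 1
    rw [hτ0]; norm_num
  have hk' : HasDerivAt k (-μ) 0 := by
    have h := (hasDerivAt_const (0:ℝ) (1:ℝ)).sub hE'
    rw [hkdef]
    refine h.congr_deriv ?_; ring
  have hu' : HasDerivAt u 1 0 := by rw [hudef]; exact hτ0'.sub_const 1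
  -- first-order limits
  have l_u : Tendsto (fun w => u w / w) (𝓝[≠] (0:ℝ)) (𝓝 1) := slope_limit' hu' hu0
  have l_k : Tendsto (fun w => k w / w) (𝓝[≠] (0:ℝ)) (𝓝 (-μ)) := slope_limit' hk' hk0
  have l_Q : Tendsto (fun w => (Q w - 1) / w) (𝓝[≠] (0:ℝ)) (𝓝 δ) :=
    slope_limit' (hQ'.sub_const 1) (by simp [hQ0])
  -- second-order information for k
  have hkd : ∀ᶠ w in 𝓝 (0:ℝ), DifferentiableAt ℝ k w :=
    hka.eventually_analyticAt.mono fun w hw => hw.differentiableAt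
  have hkderiv : deriv k =ᶠ[𝓝 (0:ℝ)] fun w => -(E w * (μ * (deriv τ w - w))) := by
    filter_upwards [hτd] with w hw
    have hIw : HasDerivAt (fun w : ℝ => τ w - 1 - w^2/2) (deriv τ w - w) w := by
      have h := (hw.hasDerivAt.sub_const 1).sub ((hasDerivAt_pow 2 w).div_const 2)
      refine h.congr_deriv ?_; push_cast; ring
    have hkw : HasDerivAt k (0 - Real.exp (μ * (τ w - 1 - w^2/2)) * (μ * (deriv τ w - w))) w := by
      rw [hkdef]
      exact (hasDerivAt_const w (1:ℝ)).sub ((hIw.const_mul μ).exp)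
    rw [hkw.deriv, hEdef]
    ring
  have hG : HasDerivAt (fun w => -(E w * (μ * (deriv τ w - w))))
      (-(μ * (μ * (deriv τ 0 - 0)) + E 0 * (μ * (deriv (deriv τ) 0 - 1)))) 0 := by
    have hMd : HasDerivAt (fun w : ℝ => μ * (deriv τ w - w)) (μ * (deriv (deriv τ) 0 - 1)) 0 :=
      (hT1a.differentiableAt.hasDerivAt.sub (hasDerivAt_id 0)).const_mul μ
    exact (hE'.mul hMd).neg
  have hk2 : HasDerivAt (deriv k) (2 * (-(μ*(3*μ-1))/6)) 0 := by
    have h := (Filter.EventuallyEq.hasDerivAt_iff hkderiv).mpr hG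
    refine h.congr_deriv ?_
    rw [hτ'0, hT20, hE0]; ring
  have hτ2' : HasDerivAt (deriv τ) (2 * (1/3 : ℝ)) 0 := by
    have h := hT1a.differentiableAt.hasDerivAt
    rw [hT20] at h
    refine h.congr_deriv ?_; norm_num
  have pk := peano2 hkd hk2
  have pτ := peano2 hτd hτ2'
  rw [hk0, hk'.deriv] at pk
  rw [hτ0, hτ'0] at pτ
  -- second-order limits
  have l_s : Tendsto (fun w => (u w - w)/w^2) (𝓝[≠] (0:ℝ)) (𝓝 (1/3 : ℝ)) := by
    have h2 : Tendsto (fun w => (τ w - 1 - 1 * w - (1/3) * w^2)/w^2 + 1/3)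
        (𝓝[≠] (0:ℝ)) (𝓝 (0 + 1/3)) := pτ.add_const (1/3)
    rw [zero_add] at h2
    refine h2.congr' ?_
    filter_upwards [self_mem_nhdsWithin] with w hw
    have hw0 : (w:ℝ) ≠ 0 := hw
    rw [hudef]
    field_simp
    ring
  have l_r : Tendsto (fun w => (k w + μ*w)/w^2) (𝓝[≠] (0:ℝ)) (𝓝 (-(μ*(3*μ-1))/6)) := by
    have h2 : Tendsto (fun w => (k w - 0 - -μ * w - (-(μ*(3*μ-1))/6) * w^2)/w^2 + (-(μ*(3*μ-1))/6))
        (𝓝[≠] (0:ℝ)) (𝓝 (0 + (-(μ*(3*μ-1))/6))) := pk.add_const _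
    rw [zero_add] at h2
    refine h2.congr' ?_
    filter_upwards [self_mem_nhdsWithin] with w hw
    have hw0 : (w:ℝ) ≠ 0 := hw
    field_simp
    ring
  have l_s1 : Tendsto (fun w => (u w - w)/w) (𝓝[≠] (0:ℝ)) (𝓝 0) := by
    have hid : Tendsto (fun w : ℝ => w) (𝓝[≠] (0:ℝ)) (𝓝 0) :=
      (continuous_id.tendsto 0).mono_left nhdsWithin_le_nhds
    have h2 : Tendsto (fun w => ((u w - w)/w^2) * w) (𝓝[≠] (0:ℝ)) (𝓝 ((1/3) * 0)) :=
      l_s.mul hid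
    rw [mul_zero] at h2
    refine h2.congr' ?_
    filter_upwards [self_mem_nhdsWithin] with w hw
    have hw0 : (w:ℝ) ≠ 0 := hw
    field_simp
  -- limits of N/w^3 and D/w^3
  have hD3 : Tendsto (fun w => D w / w^3) (𝓝[≠] (0:ℝ)) (𝓝 (-μ * 1)) := by
    have h2 := l_k.mul l_u
    refine h2.congr' ?_
    filter_upwards [self_mem_nhdsWithin] with w hw
    have hw0 : (w:ℝ) ≠ 0 := hw
    rw [hDdef]
    field_simp
  have hN3 : Tendsto (fun w => N w / w^3) (𝓝[≠] (0:ℝ))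
      (𝓝 (μ * δ + -μ * (1/3) + (-(μ*(3*μ-1))/6) + (-(μ*(3*μ-1))/6) * 0)) := by
    have h2 := (((l_Q.const_mul μ).add (l_s.const_mul (-μ))).add l_r).add (l_r.mul l_s1)
    refine h2.congr' ?_
    filter_upwards [self_mem_nhdsWithin] with w hw
    have hw0 : (w:ℝ) ≠ 0 := hw
    rw [hNdef, hudef, hkdef]
    field_simp
    ring
  -- factorizations
  have l_u1 : Tendsto (fun w => u w / w ^ 1) (𝓝[≠] (0:ℝ)) (𝓝 1) := by simpa using l_u
  have l_k1 : Tendsto (fun w => k w / w ^ 1) (𝓝[≠] (0:ℝ)) (𝓝 (-μ)) := by simpa using l_k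
  obtain ⟨u1, hu1a, hu10, hu1ev⟩ := factor' hua l_u1
  obtain ⟨k1, hk1a, hk10, hk1ev⟩ := factor' hka l_k1
  obtain ⟨n, hna, hn0, hnev⟩ := factor' hNa hN3
  obtain ⟨d, hda, hd0, hdev⟩ := factor' hDa hD3
  have hd0' : d 0 ≠ 0 := by rw [hd0]; simp [hμ0]
  refine ⟨fun w => n w / d w, hna.div hda hd0', ?_, ?_⟩
  · -- the eventual identity on the punctured neighbourhood
    have hd_ne : ∀ᶠ w in 𝓝 (0:ℝ), d w ≠ 0 := hda.continuousAt.eventually_ne hd0'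
    have hu1_ne : ∀ᶠ w in 𝓝 (0:ℝ), u1 w ≠ 0 :=
      hu1a.continuousAt.eventually_ne (by rw [hu10]; norm_num)
    have hk1_ne : ∀ᶠ w in 𝓝 (0:ℝ), k1 w ≠ 0 :=
      hk1a.continuousAt.eventually_ne (by rw [hk10]; simpa using hμ0)
    have hlog : ∀ᶠ w in 𝓝 (0:ℝ), Real.log (τ w) = τ w - 1 - w^2/2 := by
      filter_upwards [hτeq] with w hw; linarith
    filter_upwards [eventually_nhdsWithin_of_eventually_nhds hτpos,
      eventually_nhdsWithin_of_eventually_nhds hlog,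
      eventually_nhdsWithin_of_eventually_nhds hID,
      eventually_nhdsWithin_of_eventually_nhds hnev,
      eventually_nhdsWithin_of_eventually_nhds hdev,
      eventually_nhdsWithin_of_eventually_nhds hu1ev,
      eventually_nhdsWithin_of_eventually_nhds hk1ev,
      eventually_nhdsWithin_of_eventually_nhds hd_ne,
      eventually_nhdsWithin_of_eventually_nhds hu1_ne,
      eventually_nhdsWithin_of_eventually_nhds hk1_ne,
      self_mem_nhdsWithin] with w hpos hlogw hIDw hNw hDw huw hkw hdne hu1ne hk1ne hw0'
    have hw0 : (w:ℝ) ≠ 0 := hw0'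
    have hτne : τ w ≠ 0 := hpos.ne'
    have hu_ne : u w ≠ 0 := by
      rw [huw, pow_one]; exact mul_ne_zero hw0 hu1ne
    have hk_ne : k w ≠ 0 := by
      rw [hkw, pow_one]; exact mul_ne_zero hw0 hk1ne
    have hu_ne' : τ w - 1 ≠ 0 := by rw [hudef] at hu_ne; exact hu_ne
    have hk_ne' : 1 - E w ≠ 0 := by rw [hkdef] at hk_ne; exact hk_ne
    have hrpowμ : (τ w) ^ μ = E w := by
      rw [Real.rpow_def_of_pos hpos, hEdef]
      congr 1
      rw [hlogw]; ring
    have hrpowδ : (τ w) ^ (δ - 1) = Q w / τ w := by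
      rw [Real.rpow_def_of_pos hpos,
        show Real.log (τ w) * (δ - 1) = δ * Real.log (τ w) - Real.log (τ w) by ring,
        Real.exp_sub, Real.exp_log hpos, hlogw, hQdef]
    have hT1w : deriv τ w = w * τ w / (τ w - 1) := by
      rw [eq_div_iff hu_ne']
      exact hIDw.symm
    have hw3 : (w:ℝ)^3 ≠ 0 := pow_ne_zero _ hw0
    have hgnd : n w / d w = N w / D w := by
      rw [hNw, hDw, mul_div_mul_left _ _ hw3]
    rw [hgnd, hrpowδ, hrpowμ, hT1w]
    simp only [hNdef, hDdef, hkdef, hudef]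
    exact final_alg hw0 hτne hk_ne' hu_ne'
  · -- the value at 0
    show n 0 / d 0 = 1 / 6 - δ + μ / 2
    rw [hn0, hd0]
    field_simp
    ring
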